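/- Let σ₊ be a nonzero element of the group algebra ℂ[ℤ²] (Laurent polynomials in V, W) and let ∂ be the derivation with ∂(V^a W^b) = (a + τ b)·V^a W^b where τ = e^{πi/3}. Suppose ∂σ₊ = −(ε₂ + ε₃ + τε₂ + conj(τ)ε₃)·σ₊ with ε₂, ε₃ ∈ {0, 1/2}. Then ε₂ = ε₃ = 0 and σ₊ is a scalar. -/

import Mathlib

open Complex

/-- Eigenvalue equation `∂σ = λ·σ` for the diagonal derivation
`∂(V^a W^b) = (a + τ b)·V^a W^b` on the group algebra ℂ[ℤ²],
written coefficientwise. -/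
def eigenEq (τ lam : ℂ) (σ : AddMonoidAlgebra ℂ (ℤ × ℤ)) : Prop :=
  ∀ p : ℤ × ℤ, ((p.1 : ℂ) + τ * (p.2 : ℂ)) * σ.coeff p = lam * σ.coeff p

theorem z3_spin_structure_restriction (ε₂ ε₃ : ℝ)
    (hε₂ : ε₂ = 0 ∨ ε₂ = 1/2) (hε₃ : ε₃ = 0 ∨ ε₃ = 1/2)
    (τ : ℂ) (hτ : τ = Complex.exp (Real.pi * Complex.I / 3))
    (σp : AddMonoidAlgebra ℂ (ℤ × ℤ)) (hne : σp ≠ 0)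
    (heq : eigenEq τ (-((ε₂ : ℂ) + (ε₃ : ℂ) + τ * ε₂ + (starRingEnd ℂ) τ * ε₃)) σp) :
    ε₂ = 0 ∧ ε₃ = 0 ∧ ∀ p : ℤ × ℤ, p ≠ 0 → σp.coeff p = 0 := by
  have h3 : (↑Real.pi * Complex.I / 3 : ℂ) = ↑(Real.pi / 3) * Complex.I := by
    push_cast; ring
  have hre : τ.re = 1/2 := by
    rw [hτ, h3, Complex.exp_ofReal_mul_I_re, Real.cos_pi_div_three]
  have him : τ.im = Real.sqrt 3 / 2 := by
    rw [hτ, h3, Complex.exp_ofReal_mul_I_im, Real.sin_pi_div_three]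
  have hs : Real.sqrt 3 ≠ 0 := by positivity
  have key : ∀ p : ℤ × ℤ, σp.coeff p ≠ 0 →
      ((p.1 : ℝ) + (1/2) * p.2 = -(ε₂ + ε₃ + (1/2) * ε₂ + (1/2) * ε₃) ∧
       (p.2 : ℝ) = ε₃ - ε₂) := by
    intro p hp
    have h2 : ((p.1 : ℂ) + τ * p.2) = -((ε₂:ℂ) + ε₃ + τ * ε₂ + (starRingEnd ℂ) τ * ε₃) :=
      mul_right_cancel₀ hp (heq p)
    have hR := congrArg Complex.re h2
    have hI := congrArg Complex.im h2
    simp [Complex.add_re, Complex.add_im, Complex.mul_re, Complex.mul_im,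
      Complex.intCast_re, Complex.intCast_im, Complex.ofReal_re, Complex.ofReal_im,
      Complex.neg_re, Complex.neg_im, Complex.conj_re, Complex.conj_im, hre, him] at hR hI
    refine ⟨by linarith, ?_⟩
    have h' : Real.sqrt 3 * (p.2 : ℝ) = Real.sqrt 3 * (ε₃ - ε₂) := by linarith
    exact mul_left_cancel₀ hs h'
  obtain ⟨p0, hp0⟩ : ∃ p, σp.coeff p ≠ 0 := by
    by_contra h; push_neg at h; exact hne (AddMonoidAlgebra.ext (Finsupp.ext h))
  obtain ⟨hR, hI⟩ := key p0 hp0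
  rcases hε₂ with h2 | h2 <;> rcases hε₃ with h3' | h3' <;> subst h2 <;> subst h3'
  · refine ⟨rfl, rfl, ?_⟩
    intro p hp
    by_contra hc
    obtain ⟨hR', hI'⟩ := key p hc
    have hb2 : p.2 = 0 := by exact_mod_cast (by linarith : (p.2 : ℝ) = 0)
    have hb1 : p.1 = 0 := by
      have : (p.1 : ℝ) = 0 := by rw [hb2] at hR'; push_cast at hR'; linarith
      exact_mod_cast this
    exact hp (Prod.ext hb1 hb2)
  · exfalso
    have h1 : (2 * p0.2 : ℝ) = 1 := by linarith
    have : (2 * p0.2 : ℤ) = 1 := by exact_mod_cast h1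
    omega
  · exfalso
    have h1 : (2 * p0.2 : ℝ) = -1 := by linarith
    have : (2 * p0.2 : ℤ) = -1 := by exact_mod_cast h1
    omega
  · exfalso
    have hb2 : p0.2 = 0 := by exact_mod_cast (by linarith : (p0.2 : ℝ) = 0)
    rw [hb2] at hR; push_cast at hR
    have h1 : (2 * p0.1 : ℝ) = -3 := by linarith
    have : (2 * p0.1 : ℤ) = -3 := by exact_mod_cast h1
    omega
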